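/- Every proper subfunctor of a pointwise finite-dimensional, sequentially continuous functor F : M^op → vect_F is contained pointwise in a maximal (proper) subfunctor of F. -/

import Mathlib

open CategoryTheory CategoryTheory.Limits Opposite

noncomputable section

/-- The strip `M ⊂ ℝᵒᵖ × ℝ` between the two lines of slope `-1` given by
`x + y = a` and `x + y = b`. -/
def Strip (a b : ℝ) : Type := {p : ℝ × ℝ // a ≤ p.1 + p.2 ∧ p.1 + p.2 ≤ b}

namespace Strip

variable {a b : ℝ}

/-- The partial order inherited from `ℝᵒᵖ × ℝ`. -/
instance : PartialOrder (Strip a b) where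
  le p q := q.1.1 ≤ p.1.1 ∧ p.1.2 ≤ q.1.2
  le_refl p := ⟨le_rfl, le_rfl⟩
  le_trans p q r h h' := ⟨le_trans h'.1 h.1, le_trans h.2 h'.2⟩
  le_antisymm p q h h' :=
    Subtype.ext (Prod.ext (le_antisymm h'.1 h.1) (le_antisymm h.2 h'.2))

lemma le_def {p q : Strip a b} : p ≤ q ↔ q.1.1 ≤ p.1.1 ∧ p.1.2 ≤ q.1.2 := Iff.rfl

/-- The glide reflection `T`. -/
def glide (p : Strip a b) : Strip a b :=
  ⟨(a - p.1.2, b - p.1.1), by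
    obtain ⟨h1, h2⟩ := p.2; constructor <;> dsimp <;> linarith⟩

/-- The glide reflection `T` as an order isomorphism of `M`. -/
def glideEquiv : Strip a b ≃o Strip a b where
  toFun := glide
  invFun p := ⟨(b - p.1.2, a - p.1.1), by
    obtain ⟨h1, h2⟩ := p.2; constructor <;> dsimp <;> linarith⟩
  left_inv p := Subtype.ext (by simp [glide])
  right_inv p := Subtype.ext (by simp [glide])
  map_rel_iff' {p q} := by
    show (glide p ≤ glide q) ↔ _
    simp only [le_def, glide]
    constructor <;> rintro ⟨h1, h2⟩ <;> exact ⟨by linarith, by linarith⟩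

lemma glideEquiv_coords (p : Strip a b) :
    (glideEquiv p).1 = (a - p.1.2, b - p.1.1) := rfl

lemma glideEquiv_symm_coords (p : Strip a b) :
    (glideEquiv.symm p).1 = (b - p.1.2, a - p.1.1) := rfl

/-- The boundary `∂M = l₀ ∪ l₁`. -/
def OnBoundary (p : Strip a b) : Prop := p.1.1 + p.1.2 = a ∨ p.1.1 + p.1.2 = b

/-- The interior `int M`. -/
def InInterior (p : Strip a b) : Prop := a < p.1.1 + p.1.2 ∧ p.1.1 + p.1.2 < b

/-- `u` belongs to `(↓v) ∩ int(↑ T⁻¹ v)`, the support of the contravariant block `B_v`;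
equivalently, `v ∈ (↑u) ∩ int(↓ T u)`. -/
def BlockCond (v u : Strip a b) : Prop :=
  u ≤ v ∧ u.1.1 < b - v.1.2 ∧ a - v.1.1 < u.1.2

lemma blockCond_convex {v u u' u'' : Strip a b} (h1 : u ≤ u') (h2 : u' ≤ u'')
    (hu : BlockCond v u) (hu'' : BlockCond v u'') : BlockCond v u' :=
  ⟨le_trans h2 hu''.1, lt_of_le_of_lt h1.1 hu.2.1, lt_of_lt_of_le hu.2.2 h1.2⟩

lemma simpleCond_convex {w u u' u'' : Strip a b} (h1 : u ≤ u') (h2 : u' ≤ u'')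
    (hu : u = w) (hu'' : u'' = w) : u' = w :=
  le_antisymm (hu'' ▸ h2) (hu ▸ h1)

variable (a b) in
/-- An axis-aligned rectangle in `M` with corners `u ≤ v ≤ w` and remaining corner on `l₁`. -/
def IsCohomRect (u v w : Strip a b) : Prop :=
  u ≤ v ∧ v ≤ w ∧
    ((v.1.1 = u.1.1 ∧ v.1.2 = w.1.2 ∧ w.1.1 + u.1.2 = b) ∨
     (v.1.1 = w.1.1 ∧ v.1.2 = u.1.2 ∧ u.1.1 + w.1.2 = b))

lemma IsCohomRect.w_le_glide {u v w : Strip a b} (h : IsCohomRect a b u v w) :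
    w ≤ glideEquiv u := by
  obtain ⟨h1, h2, h3⟩ := h
  have hu := u.2; have hv := v.2; have hw := w.2
  obtain ⟨hle1, hle2⟩ := h1; obtain ⟨hle3, hle4⟩ := h2
  rw [le_def]
  rcases h3 with ⟨e1, e2, e3⟩ | ⟨e1, e2, e3⟩ <;>
    exact ⟨by rw [glideEquiv_coords]; dsimp; linarith,
           by rw [glideEquiv_coords]; dsimp; linarith⟩

lemma IsCohomRect.glideInv_le {u v w : Strip a b} (h : IsCohomRect a b u v w) :
    glideEquiv.symm w ≤ u := by
  have := h.w_le_glide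
  have h2 := glideEquiv.symm.monotone this
  simpa using h2

end Strip

section Functors

open Strip

variable (a b : ℝ) (K : Type) [Field K]

attribute [local instance] Classical.propDecidable

/-- auxiliary linear map used for the internal maps of `condFunctor`. -/
def condMap (P : Strip a b → Prop) (u u' : Strip a b) :
    ((PLift (P u') → K) →ₗ[K] (PLift (P u) → K)) where
  toFun f _ := if h' : P u' then f ⟨h'⟩ else 0
  map_add' f g := by funext h; by_cases h' : P u' <;> simp [h']
  map_smul' c f := by funext h; by_cases h' : P u' <;> simp [h']

@[simp] lemma condMap_apply (P : Strip a b → Prop) (u u' : Strip a b)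
    (f : PLift (P u') → K) (h : PLift (P u)) :
    condMap a b K P u u' f h = if h' : P u' then f ⟨h'⟩ else 0 := rfl

/-- A functor `Mᵒᵖ ⥤ Vect_K` supported on the set of points satisfying `P`,
with internal maps the identity wherever possible.  Both the contravariant blocks `B_v`
and the simple functors `S_w` arise this way. -/
def condFunctor (P : Strip a b → Prop)
    (hconv : ∀ ⦃u u' u'' : Strip a b⦄, u ≤ u' → u' ≤ u'' → P u → P u'' → P u') :
    (Strip a b)ᵒᵖ ⥤ ModuleCat K where
  obj u := ModuleCat.of K (PLift (P u.unop) → K)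
  map {x y} f := ModuleCat.ofHom (condMap a b K P y.unop x.unop)
  map_id x := by
    apply ModuleCat.hom_ext
    refine LinearMap.ext fun f => funext fun h => ?_
    show (if h' : P x.unop then f ⟨h'⟩ else 0) = f h
    rw [dif_pos h.down]
  map_comp {x y z} f g := by
    apply ModuleCat.hom_ext
    refine LinearMap.ext fun v => funext fun h => ?_
    show (if h' : P x.unop then v ⟨h'⟩ else 0)
        = condMap a b K P z.unop y.unop (condMap a b K P y.unop x.unop v) h
    by_cases hx : P x.unop
    · have hy : P y.unop := hconv (leOfHom g.unop) (leOfHom f.unop) h.down hx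
      simp [hx, hy]
    · by_cases hy : P y.unop <;> simp [hx, hy]

/-- The contravariant block `B_v`. -/
def Block (v : Strip a b) : (Strip a b)ᵒᵖ ⥤ ModuleCat K :=
  condFunctor a b K (BlockCond v) (fun _ _ _ h1 h2 hu hu'' => blockCond_convex h1 h2 hu hu'')

/-- The simple functor `S_w`. -/
def SimpleF (w : Strip a b) : (Strip a b)ᵒᵖ ⥤ ModuleCat K :=
  condFunctor a b K (fun u => u = w) (fun _ _ _ h1 h2 hu hu'' => simpleCond_convex h1 h2 hu hu'')

variable {a b K}

/-- The structure map `G(y) → G(x)` of a functor, for `x ≤ y` in `M`. -/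
def seqMap (G : (Strip a b)ᵒᵖ ⥤ ModuleCat K) {x y : Strip a b} (h : x ≤ y) :
    G.obj (op y) ⟶ G.obj (op x) :=
  G.map (homOfLE h).op

variable (a b K)

/-- Pointwise finite-dimensionality. -/
def Pfd (G : (Strip a b)ᵒᵖ ⥤ ModuleCat K) : Prop :=
  ∀ u : Strip a b, FiniteDimensional K (G.obj (op u))

/-- Vanishing on the boundary `∂M`. -/
def VanishesOnBoundary (G : (Strip a b)ᵒᵖ ⥤ ModuleCat K) : Prop :=
  ∀ u : Strip a b, OnBoundary u → ∀ x : G.obj (op u), x = 0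

/-- Sequential continuity: for every increasing sequence `u_k` converging to `L`, the
natural map `G L → lim_k G (u k)` is an isomorphism; elementarily, every compatible
family lifts uniquely. -/
def SeqContinuousF (G : (Strip a b)ᵒᵖ ⥤ ModuleCat K) : Prop :=
  ∀ (u : ℕ → Strip a b) (hu : Monotone u) (L : Strip a b) (hle : ∀ k, u k ≤ L),
    Filter.Tendsto (fun k => (u k).1) Filter.atTop (nhds L.1) →
    ∀ x : ∀ k, G.obj (op (u k)),
      (∀ k, seqMap G (hu (Nat.le_succ k)) (x (k + 1)) = x k) →
      ∃! y : G.obj (op L), ∀ k, seqMap G (hle k) y = x k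

/-- Cohomologicality: the long sequences associated to axis-aligned rectangles with one
corner on `l₁` are exact. -/
def Cohomological (G : (Strip a b)ᵒᵖ ⥤ ModuleCat K) : Prop :=
  VanishesOnBoundary a b K G ∧
  ∀ (u v w : Strip a b) (h : IsCohomRect a b u v w) (n : ℤ),
    (Function.Exact
        (seqMap G (((glideEquiv ^ n : Strip a b ≃o Strip a b)).monotone h.w_le_glide))
        (seqMap G (((glideEquiv ^ n : Strip a b ≃o Strip a b)).monotone h.2.1))) ∧
    (Function.Exact
        (seqMap G (((glideEquiv ^ n : Strip a b ≃o Strip a b)).monotone h.2.1))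
        (seqMap G (((glideEquiv ^ n : Strip a b ≃o Strip a b)).monotone h.1))) ∧
    (Function.Exact
        (seqMap G (((glideEquiv ^ n : Strip a b ≃o Strip a b)).monotone h.1))
        (seqMap G (((glideEquiv ^ n : Strip a b ≃o Strip a b)).monotone h.glideInv_le)))

/-- Bounded above support: the support is contained in the downset `{y - x ≤ c}`. -/
def BddAboveSupport (G : (Strip a b)ᵒᵖ ⥤ ModuleCat K) : Prop :=
  ∃ c : ℝ, ∀ u : Strip a b, c < u.1.2 - u.1.1 → ∀ x : G.obj (op u), x = 0

/-- Membership in the category `𝒥` of pfd, cohomological, sequentially continuous functors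
with bounded above support. -/
def MemJ (G : (Strip a b)ᵒᵖ ⥤ ModuleCat K) : Prop :=
  Pfd a b K G ∧ Cohomological a b K G ∧ SeqContinuousF a b K G ∧ BddAboveSupport a b K G

/-- `𝒥`-presentability. -/
def JPresentable (G : (Strip a b)ᵒᵖ ⥤ ModuleCat K) : Prop :=
  ∃ (H P : (Strip a b)ᵒᵖ ⥤ ModuleCat K) (_ : MemJ a b K H) (_ : MemJ a b K P)
    (f : H ⟶ P) (g : P ⟶ G),
      (∀ u : (Strip a b)ᵒᵖ, Function.Exact (f.app u) (g.app u)) ∧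
      (∀ u : (Strip a b)ᵒᵖ, Function.Surjective (g.app u))

/-- The 0-th Betti function `β⁰(G) : int M → ℕ`, `u ↦ dim Nat(G, S_u)`. -/
def beta0 (G : (Strip a b)ᵒᵖ ⥤ ModuleCat K) (v : Strip a b) : ℕ :=
  if InInterior v then Module.finrank K (G ⟶ SimpleF a b K v) else 0

/-- Admissible Betti functions. -/
def AdmissibleBetti (β : Strip a b → ℕ) : Prop :=
  (∀ v, ¬ InInterior v → β v = 0) ∧
  (∃ c : ℝ, ∀ v : Strip a b, c < v.1.2 - v.1.1 → β v = 0) ∧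
  (∀ u : Strip a b, {v : Strip a b | BlockCond v u ∧ β v ≠ 0}.Finite)

/-- Admissible Euler functions. -/
def AdmissibleEuler (μ : Strip a b → ℤ) : Prop :=
  AdmissibleBetti a b (fun v => (μ v).natAbs)

end Functors

section More

open Strip DirectSum

variable (a b : ℝ) (K : Type) [Field K]

attribute [local instance] Classical.propDecidable

lemma condMap_comp (P : Strip a b → Prop)
    (hconv : ∀ ⦃u u' u'' : Strip a b⦄, u ≤ u' → u' ≤ u'' → P u → P u'' → P u')
    {u u' u'' : Strip a b} (h1 : u ≤ u') (h2 : u' ≤ u'') :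
    condMap a b K P u u'' =
      (condMap a b K P u u').comp (condMap a b K P u' u'') := by
  refine LinearMap.ext fun f => funext fun h => ?_
  by_cases hx : P u''
  · have hy : P u' := hconv h1 h2 h.down hx
    simp [hx, hy]
  · by_cases hy : P u' <;> simp [hx, hy]

/-- A direct sum of `condFunctor`s for an indexed family of supports. -/
def condSumFunctor (ι : Type) (P : ι → Strip a b → Prop)
    (hconv : ∀ i, ∀ ⦃u u' u'' : Strip a b⦄, u ≤ u' → u' ≤ u'' → P i u → P i u'' → P i u') :
    (Strip a b)ᵒᵖ ⥤ ModuleCat K where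
  obj u := ModuleCat.of K (⨁ i : ι, (PLift (P i u.unop) → K))
  map {x y} f := ModuleCat.ofHom
    (DFinsupp.mapRange.linearMap (fun i => condMap a b K (P i) y.unop x.unop))
  map_id x := by
    have e : (fun i => condMap a b K (P i) x.unop x.unop)
        = fun i : ι => (LinearMap.id : (PLift (P i x.unop) → K) →ₗ[K] _) := by
      funext i
      refine LinearMap.ext fun f => funext fun h => ?_
      show (if h' : P i x.unop then f ⟨h'⟩ else 0) = f h
      rw [dif_pos h.down]
    change ModuleCat.ofHom
      (DFinsupp.mapRange.linearMap fun i => condMap a b K (P i) x.unop x.unop) = _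
    rw [e, DFinsupp.mapRange.linearMap_id]
    rfl
  map_comp {x y z} f g := by
    have e : (fun i => condMap a b K (P i) z.unop x.unop)
        = fun i => (condMap a b K (P i) z.unop y.unop).comp
            (condMap a b K (P i) y.unop x.unop) := by
      funext i
      exact condMap_comp a b K (P i) (hconv i) (leOfHom g.unop) (leOfHom f.unop)
    change ModuleCat.ofHom
      (DFinsupp.mapRange.linearMap fun i => condMap a b K (P i) z.unop x.unop) = _
    rw [e, DFinsupp.mapRange.linearMap_comp]
    rfl

/-- The direct sum `⊕_{v} B_v^{m v}` of contravariant blocks with multiplicities `m`. -/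
def blockSum (m : Strip a b → ℕ) : (Strip a b)ᵒᵖ ⥤ ModuleCat K :=
  condSumFunctor a b K (Σ v : Strip a b, Fin (m v)) (fun s u => BlockCond s.1 u)
    (fun _ _ _ _ h1 h2 hu hu'' => blockCond_convex h1 h2 hu hu'')

/-- The pointwise direct sum of a sequence of functors. -/
def sumFunctor (Q : ℕ → (Strip a b)ᵒᵖ ⥤ ModuleCat K) :
    (Strip a b)ᵒᵖ ⥤ ModuleCat K where
  obj u := ModuleCat.of K (⨁ n : ℕ, (Q n).obj u)
  map {x y} f := ModuleCat.ofHom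
    (DFinsupp.mapRange.linearMap (fun n => (((Q n).map f).hom : (Q n).obj x →ₗ[K] (Q n).obj y)))
  map_id x := by
    have e : (fun n => (((Q n).map (𝟙 x)).hom : (Q n).obj x →ₗ[K] (Q n).obj x))
        = fun n : ℕ => LinearMap.id := by
      funext n; rw [CategoryTheory.Functor.map_id]; rfl
    change ModuleCat.ofHom (DFinsupp.mapRange.linearMap
      fun n => (((Q n).map (𝟙 x)).hom : (Q n).obj x →ₗ[K] (Q n).obj x)) = _
    rw [e, DFinsupp.mapRange.linearMap_id]
    rfl
  map_comp {x y z} f g := by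
    have e : (fun n => (((Q n).map (f ≫ g)).hom : (Q n).obj x →ₗ[K] (Q n).obj z))
        = fun n => ((((Q n).map g).hom : (Q n).obj y →ₗ[K] (Q n).obj z).comp
            (((Q n).map f).hom : (Q n).obj x →ₗ[K] (Q n).obj y)) := by
      funext n; rw [CategoryTheory.Functor.map_comp]; rfl
    change ModuleCat.ofHom (DFinsupp.mapRange.linearMap
      fun n => (((Q n).map (f ≫ g)).hom : (Q n).obj x →ₗ[K] (Q n).obj z)) = _
    rw [e, DFinsupp.mapRange.linearMap_comp]
    rfl

/-- Precomposition with the glide reflection `T`, as an endofunctor of `Mᵒᵖ`. -/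
def Tfun : (Strip a b)ᵒᵖ ⥤ (Strip a b)ᵒᵖ :=
  ((glideEquiv (a := a) (b := b)).monotone.functor).op

/-- A resolution of `G` by functors in `𝒥` (hence a projective resolution in `𝒞`). -/
def IsJResolution (G : (Strip a b)ᵒᵖ ⥤ ModuleCat K)
    (P : ℕ → (Strip a b)ᵒᵖ ⥤ ModuleCat K)
    (d : ∀ n, P (n + 1) ⟶ P n) (ε : P 0 ⟶ G) : Prop :=
  (∀ n, MemJ a b K (P n)) ∧
  (∀ u, Function.Surjective ((ε.app u))) ∧
  (∀ u, Function.Exact ((d 0).app u) (ε.app u)) ∧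
  (∀ n u, Function.Exact ((d (n + 1)).app u) ((d n).app u))

/-- Equivariance of a resolution: `P (n+3) = P n ∘ T` and `d (n+3) = - d n ∘ T`. -/
def IsEquivariantRes (P : ℕ → (Strip a b)ᵒᵖ ⥤ ModuleCat K)
    (d : ∀ n, P (n + 1) ⟶ P n) : Prop :=
  ∃ hEq : ∀ n, P (n + 3) = Tfun a b ⋙ P n,
    ∀ n, d (n + 3) =
      eqToHom (hEq (n + 1)) ≫ (-(Functor.whiskerLeft (Tfun a b) (d n))) ≫ eqToHom (hEq n).symm

/-- The cochain complex `Nat(P_•, S_v)` obtained by applying `Nat(-, S_v)` to a resolution. -/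
def dStar (P : ℕ → (Strip a b)ᵒᵖ ⥤ ModuleCat K) (d : ∀ n, P (n + 1) ⟶ P n)
    (v : Strip a b) (n : ℕ) :
    (P n ⟶ SimpleF a b K v) →ₗ[K] (P (n + 1) ⟶ SimpleF a b K v) :=
  Linear.leftComp K (SimpleF a b K v) (d n)

/-- `dim_K Extⁿ_𝒞(G, S_v)`, computed as the `n`-th cohomology of `Nat(P_•, S_v)` for a
projective resolution `P_•` of `G` in `𝒞`. -/
def extDim (P : ℕ → (Strip a b)ᵒᵖ ⥤ ModuleCat K) (d : ∀ n, P (n + 1) ⟶ P n)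
    (v : Strip a b) : ℕ → ℕ
  | 0 => Module.finrank K (LinearMap.ker (dStar a b K P d v 0))
  | (n + 1) =>
      Module.finrank K
        (↥(LinearMap.ker (dStar a b K P d v (n + 1))) ⧸
          Submodule.comap (LinearMap.ker (dStar a b K P d v (n + 1))).subtype
            (LinearMap.range (dStar a b K P d v n)))

/-- The partial alternating sum `Σ_{n < N} (-1)ⁿ dim Extⁿ(F, S_v)`. -/
def eulerAt (P : ℕ → (Strip a b)ᵒᵖ ⥤ ModuleCat K) (d : ∀ n, P (n + 1) ⟶ P n)
    (v : Strip a b) (N : ℕ) : ℤ :=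
  ∑ n ∈ Finset.range N, (-1 : ℤ) ^ n * (extDim a b K P d v n : ℤ)

/-- Objects of `𝒥`. -/
def JObj : Type 1 := {G : (Strip a b)ᵒᵖ ⥤ ModuleCat.{0} K // MemJ a b K G}

/-- Objects of `pres(𝒥)`. -/
def PresObj : Type 1 := {G : (Strip a b)ᵒᵖ ⥤ ModuleCat.{0} K // JPresentable a b K G}

/-- Relations defining `K₀` of `𝒥`: `[Q] = [P] + [R]` for every (automatically split)
short exact sequence `0 → P → Q → R → 0` in `𝒥`. -/
def K0JRelations : Set (FreeAbelianGroup (JObj a b K)) :=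
  {x | ∃ (P Q R : JObj a b K) (κ : P.1 ⟶ Q.1) (ρ : Q.1 ⟶ R.1),
    (∀ u, Function.Injective (κ.app u)) ∧ (∀ u, Function.Surjective (ρ.app u)) ∧
    (∀ u, Function.Exact (κ.app u) (ρ.app u)) ∧
    x = FreeAbelianGroup.of Q - FreeAbelianGroup.of P - FreeAbelianGroup.of R}

/-- The Grothendieck group `K₀(𝒥)`. -/
def K0J : Type 1 :=
  FreeAbelianGroup (JObj a b K) ⧸ AddSubgroup.closure (K0JRelations a b K)

instance : AddCommGroup (K0J a b K) := by unfold K0J; infer_instance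

/-- The class `[G] ∈ K₀(𝒥)`. -/
def K0Jmk (G : JObj a b K) : K0J a b K :=
  QuotientAddGroup.mk (FreeAbelianGroup.of G)

/-- Relations defining `K₀` of `pres(𝒥)`: `[Q] = [P] + [R]` for every short exact
sequence `0 → P → Q → R → 0` of `𝒥`-presentable functors. -/
def K0PresRelations : Set (FreeAbelianGroup (PresObj a b K)) :=
  {x | ∃ (P Q R : PresObj a b K) (κ : P.1 ⟶ Q.1) (ρ : Q.1 ⟶ R.1),
    (∀ u, Function.Injective (κ.app u)) ∧ (∀ u, Function.Surjective (ρ.app u)) ∧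
    (∀ u, Function.Exact (κ.app u) (ρ.app u)) ∧
    x = FreeAbelianGroup.of Q - FreeAbelianGroup.of P - FreeAbelianGroup.of R}

/-- The Grothendieck group `K₀(pres 𝒥)`. -/
def K0Pres : Type 1 :=
  FreeAbelianGroup (PresObj a b K) ⧸ AddSubgroup.closure (K0PresRelations a b K)

instance : AddCommGroup (K0Pres a b K) := by unfold K0Pres; infer_instance

/-- The class `[G] ∈ K₀(pres 𝒥)`. -/
def K0PresMk (G : PresObj a b K) : K0Pres a b K :=
  QuotientAddGroup.mk (FreeAbelianGroup.of G)

/-- The abelian group `G(𝔹)` of admissible Euler functions. -/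
def eulerGroup : AddSubgroup (Strip a b → ℤ) where
  carrier := {μ | AdmissibleEuler a b μ}
  zero_mem' := by
    refine ⟨fun v _ => rfl, ⟨0, fun v _ => rfl⟩, fun u => ?_⟩
    convert Set.finite_empty
    ext v; simp
  add_mem' := by
    rintro μ ν ⟨h1, ⟨c1, h2⟩, h3⟩ ⟨h1', ⟨c2, h2'⟩, h3'⟩
    refine ⟨fun v hv => ?_, ⟨max c1 c2, fun v hv => ?_⟩, fun u => ?_⟩
    · simp only [Pi.add_apply]
      rw [show μ v = 0 by simpa using h1 v hv, show ν v = 0 by simpa using h1' v hv]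
      rfl
    · simp only [Pi.add_apply]
      rw [show μ v = 0 by simpa using h2 v (lt_of_le_of_lt (le_max_left _ _) hv),
        show ν v = 0 by simpa using h2' v (lt_of_le_of_lt (le_max_right _ _) hv)]
      rfl
    · refine Set.Finite.subset ((h3 u).union (h3' u)) ?_
      rintro v ⟨hb, hne⟩
      by_cases hμ : μ v = 0
      · exact Or.inr ⟨hb, by simp only [Pi.add_apply, hμ, zero_add] at hne; simpa using hne⟩
      · exact Or.inl ⟨hb, by simpa using hμ⟩
  neg_mem' := by
    rintro μ ⟨h1, h2, h3⟩
    refine ⟨fun v hv => ?_, ?_, fun u => ?_⟩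
    · simp only [Pi.neg_apply, Int.natAbs_neg]; exact h1 v hv
    · obtain ⟨c, hc⟩ := h2
      exact ⟨c, fun v hv => by simp only [Pi.neg_apply, Int.natAbs_neg]; exact hc v hv⟩
    · refine Set.Finite.subset (h3 u) ?_
      rintro v ⟨hb, hne⟩
      exact ⟨hb, by simpa [Int.natAbs_neg] using hne⟩

/-- Subfunctors of a functor `G : Mᵒᵖ ⥤ Vect_K`. -/
def Subfunctor (G : (Strip a b)ᵒᵖ ⥤ ModuleCat K) : Type :=
  {S : ∀ u : Strip a b, Submodule K (G.obj (op u)) //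
    ∀ (u u' : Strip a b) (h : u' ≤ u), Submodule.map (seqMap G h).hom (S u) ≤ S u'}

end More

end

section Aux

open Strip

attribute [local instance] Classical.propDecidable

variable {a b : ℝ} {K : Type} [Field K]

namespace PSLM

/-- joins exist in the strip -/
lemma exists_join (p q : Strip a b) : ∃ r : Strip a b, p ≤ r ∧ q ≤ r := by
  rcases le_total p.1.2 q.1.2 with h | h
  · refine ⟨⟨(min p.1.1 q.1.1, q.1.2), ?_, ?_⟩, ?_, ?_⟩
    · rcases min_cases p.1.1 q.1.1 with ⟨e, _⟩ | ⟨e, _⟩ <;> rw [e]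
      · have := p.2.1; dsimp; linarith
      · have := q.2.1; dsimp; linarith
    · rcases min_cases p.1.1 q.1.1 with ⟨e, h2⟩ | ⟨e, h2⟩ <;> rw [e]
      · have := q.2.2; dsimp at *; linarith
      · have := q.2.2; dsimp; linarith
    · exact ⟨min_le_left _ _, h⟩
    · exact ⟨min_le_right _ _, le_rfl⟩
  · refine ⟨⟨(min p.1.1 q.1.1, p.1.2), ?_, ?_⟩, ?_, ?_⟩
    · rcases min_cases p.1.1 q.1.1 with ⟨e, _⟩ | ⟨e, _⟩ <;> rw [e]
      · have := p.2.1; dsimp; linarith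
      · have := q.2.1; dsimp; linarith
    · rcases min_cases p.1.1 q.1.1 with ⟨e, h2⟩ | ⟨e, h2⟩ <;> rw [e]
      · have := p.2.2; dsimp; linarith
      · have := p.2.2; dsimp at *; linarith
    · exact ⟨min_le_left _ _, le_rfl⟩
    · exact ⟨min_le_right _ _, h⟩

variable (F : (Strip a b)ᵒᵖ ⥤ ModuleCat K)

lemma seqMap_refl_apply (u : Strip a b) (x : F.obj (op u)) :
    seqMap F (le_refl u) x = x := by
  show (F.map (homOfLE (le_refl u)).op) x = x
  rw [show homOfLE (le_refl u) = 𝟙 u from Subsingleton.elim _ _, op_id, F.map_id]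
  rfl

lemma seqMap_seqMap {x y z : Strip a b} (h1 : x ≤ y) (h2 : y ≤ z) (v : F.obj (op z)) :
    seqMap F h1 (seqMap F h2 v) = seqMap F (h1.trans h2) v := by
  show (F.map (homOfLE h1).op) ((F.map (homOfLE h2).op) v) = (F.map (homOfLE (h1.trans h2)).op) v
  rw [show homOfLE (h1.trans h2) = homOfLE h1 ≫ homOfLE h2 from Subsingleton.elim _ _,
    op_comp, F.map_comp]
  rfl


variable {V : Type} [AddCommGroup V] [Module K V]

/-- a proper submodule is killed by some nonzero functional -/
lemma exists_dual (W : Submodule K V) (hW : W ≠ ⊤) :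
    ∃ φ : V →ₗ[K] K, φ ≠ 0 ∧ ∀ x ∈ W, φ x = 0 := by
  obtain ⟨x, hx⟩ : ∃ x, x ∉ W := by
    by_contra h
    push_neg at h
    exact hW (Submodule.eq_top_iff'.2 h)
  have hx0 : W.mkQ x ≠ 0 := by
    simpa [Submodule.Quotient.mk_eq_zero] using hx
  obtain ⟨ψ, hψ⟩ : ∃ ψ : Module.Dual K (V ⧸ W), ψ (W.mkQ x) ≠ 0 := by
    by_contra h
    push_neg at h
    exact hx0 ((Module.forall_dual_apply_eq_zero_iff K _).1 h)
  refine ⟨ψ.comp W.mkQ, fun h0 => hψ ?_, fun y hy => ?_⟩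
  · have := congrArg (fun f : V →ₗ[K] K => f x) h0
    simpa using this
  · simp [Submodule.Quotient.mk_eq_zero, (Submodule.Quotient.mk_eq_zero W).2 hy]

/-- kernels of nonzero functionals are coatoms -/
lemma ker_coatom (φ : V →ₗ[K] K) (hφ : φ ≠ 0) (S : Submodule K V)
    (hle : LinearMap.ker φ ≤ S) (hne : S ≠ LinearMap.ker φ) : S = ⊤ := by
  obtain ⟨s, hsS, hsk⟩ : ∃ s ∈ S, s ∉ LinearMap.ker φ := by
    by_contra h
    push_neg at h
    exact hne (le_antisymm h hle)
  have hφs : φ s ≠ 0 := hsk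
  rw [Submodule.eq_top_iff']
  intro x
  have hker : x - (φ x / φ s) • s ∈ LinearMap.ker φ := by
    simp [LinearMap.mem_ker, div_mul_cancel₀, hφs]
  have := S.add_mem (hle hker) (S.smul_mem (φ x / φ s) hsS)
  simpa using this

lemma exists_stable (hpfd : Pfd a b K F) (u : Strip a b) :
    ∃ v : Strip a b, ∃ h : u ≤ v, ∀ (w : Strip a b) (h' : u ≤ w), v ≤ w →
      LinearMap.range (seqMap F h').hom = LinearMap.range (seqMap F h).hom := by
  haveI := hpfd u
  have hne : {n : ℕ | ∃ (v : Strip a b) (h : u ≤ v),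
      n = Module.finrank K (LinearMap.range (seqMap F h).hom)}.Nonempty :=
    ⟨_, u, le_refl u, rfl⟩
  obtain ⟨v, h, hrk⟩ := Nat.sInf_mem hne
  refine ⟨v, h, fun w h' hvw => ?_⟩
  have hle : LinearMap.range (seqMap F h').hom ≤ LinearMap.range (seqMap F h).hom := by
    rintro x ⟨ξ, rfl⟩
    exact ⟨seqMap F hvw ξ, seqMap_seqMap F h hvw ξ⟩
  have hfr : Module.finrank K (LinearMap.range (seqMap F h).hom) ≤
      Module.finrank K (LinearMap.range (seqMap F h').hom) := by
    rw [← hrk]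
    exact Nat.sInf_le ⟨w, h', rfl⟩
  exact Submodule.eq_of_le_of_finrank_le hle hfr

lemma stable_push {u u' : Strip a b} (huu' : u ≤ u') {v : Strip a b} (h : u ≤ v)
    (hstab : ∀ (w : Strip a b) (h' : u ≤ w), v ≤ w →
      LinearMap.range (seqMap F h').hom = LinearMap.range (seqMap F h).hom)
    {v' : Strip a b} (h' : u' ≤ v')
    (hstab' : ∀ (w : Strip a b) (h'' : u' ≤ w), v' ≤ w →
      LinearMap.range (seqMap F h'').hom = LinearMap.range (seqMap F h').hom) :
    Submodule.map (seqMap F huu').hom (LinearMap.range (seqMap F h').hom) =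
      LinearMap.range (seqMap F h).hom := by
  obtain ⟨w, hv, hv'⟩ := exists_join v v'
  have hw' : u' ≤ w := h'.trans hv'
  have hw : u ≤ w := huu'.trans hw'
  rw [← hstab' w hw' hv', ← hstab w hw hv]
  apply le_antisymm
  · rintro x hx
    obtain ⟨y, hy, rfl⟩ := Submodule.mem_map.1 hx
    obtain ⟨ξ, rfl⟩ := hy
    exact ⟨ξ, (seqMap_seqMap F huu' hw' ξ).symm⟩
  · rintro x ⟨ξ, rfl⟩
    exact Submodule.mem_map.2 ⟨seqMap F hw' ξ, ⟨ξ, rfl⟩, seqMap_seqMap F huu' hw' ξ⟩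

lemma exists_range_bot (hpfd : Pfd a b K F) (hseq : SeqContinuousF a b K F)
    (hvan : VanishesOnBoundary a b K F) (u : Strip a b) :
    ∃ v : Strip a b, ∃ h : u ≤ v, LinearMap.range (seqMap F h).hom = ⊥ := by
  by_cases hb : u.1.1 + u.1.2 = b
  · refine ⟨u, le_refl u, ?_⟩
    rw [eq_bot_iff]
    rintro x ⟨ξ, rfl⟩
    rw [Submodule.mem_bot]
    exact hvan u (Or.inr hb) _
  have hsum_lt : u.1.1 + u.1.2 < b := lt_of_le_of_ne u.2.2 hb
  set s : ℝ := b - (u.1.1 + u.1.2) with hs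
  have hs0 : 0 < s := by simp only [hs]; linarith
  have hky : ∀ k : ℕ, (0:ℝ) < (k:ℝ) + 1 := fun k => by positivity
  have hdle : ∀ k : ℕ, s / ((k:ℝ)+1) ≤ s := fun k =>
    div_le_self hs0.le (by linarith [Nat.cast_nonneg (α := ℝ) k])
  have hdpos : ∀ k : ℕ, 0 < s / ((k:ℝ)+1) := fun k => div_pos hs0 (hky k)
  have hmemseq : ∀ k : ℕ, a ≤ u.1.1 + (u.1.2 + (s - s/((k:ℝ)+1))) ∧
      u.1.1 + (u.1.2 + (s - s/((k:ℝ)+1))) ≤ b := by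
    intro k
    have h1 := hdle k
    have h2 := hdpos k
    have h3 := u.2.1
    constructor <;> simp only [hs] at * <;> linarith
  set useq : ℕ → Strip a b := fun k =>
    ⟨(u.1.1, u.1.2 + (s - s/((k:ℝ)+1))), hmemseq k⟩ with huseq
  have humono : Monotone useq := by
    apply monotone_nat_of_le_succ
    intro k
    refine ⟨le_rfl, ?_⟩
    show u.1.2 + (s - s/((k:ℝ)+1)) ≤ u.1.2 + (s - s/(((k+1:ℕ):ℝ)+1))
    push_cast
    have : s / ((k:ℝ)+1+1) ≤ s/((k:ℝ)+1) :=
      div_le_div_of_nonneg_left hs0.le (hky k) (by linarith)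
    linarith
  have hLmem : a ≤ u.1.1 + (u.1.2 + s) ∧ u.1.1 + (u.1.2 + s) ≤ b := by
    constructor <;> simp only [hs] <;> linarith [u.2.1]
  set L : Strip a b := ⟨(u.1.1, u.1.2 + s), hLmem⟩ with hL
  have hleL : ∀ k, useq k ≤ L := by
    intro k
    refine ⟨le_rfl, ?_⟩
    show u.1.2 + (s - s/((k:ℝ)+1)) ≤ u.1.2 + s
    linarith [hdpos k]
  have htend : Filter.Tendsto (fun k => (useq k).1) Filter.atTop (nhds L.1) := by
    have h1 : Filter.Tendsto (fun k : ℕ => s/((k:ℝ)+1)) Filter.atTop (nhds 0) := by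
      have h2 := (tendsto_const_div_atTop_nhds_zero_nat s).comp
        (Filter.tendsto_add_atTop_nat 1)
      have : ((fun n : ℕ => s / (n:ℝ)) ∘ fun a => a + 1) = fun k : ℕ => s/((k:ℝ)+1) := by
        funext k; simp [Function.comp]
      rwa [this] at h2
    have h2 : Filter.Tendsto (fun k : ℕ => u.1.2 + (s - s/((k:ℝ)+1)))
        Filter.atTop (nhds (u.1.2 + s)) := by
      have h3 := (tendsto_const_nhds (x := u.1.2) (f := (Filter.atTop : Filter ℕ))).add
        ((tendsto_const_nhds (x := s) (f := (Filter.atTop : Filter ℕ))).sub h1)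
      simpa using h3
    have h4 := (tendsto_const_nhds (x := u.1.1) (f := (Filter.atTop : Filter ℕ))).prodMk_nhds h2
    exact h4
  obtain ⟨v₀, h₀, hstab₀⟩ := exists_stable F hpfd u
  refine ⟨v₀, h₀, ?_⟩
  have hu0 : u ≤ useq 0 := by
    refine ⟨le_rfl, ?_⟩
    show u.1.2 ≤ u.1.2 + (s - s/(((0:ℕ):ℝ)+1))
    norm_num
  choose vk hvk hstabk using fun k => exists_stable F hpfd (useq k)
  set D : ∀ k : ℕ, Submodule K (F.obj (op (useq k))) :=
    fun k => LinearMap.range (seqMap F (hvk k)).hom with hD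
  have hpush : ∀ k, Submodule.map (seqMap F (humono (Nat.le_succ k))).hom (D (k+1)) = D k :=
    fun k => stable_push F (humono (Nat.le_succ k)) (hvk k) (hstabk k) (hvk (k+1)) (hstabk (k+1))
  have hpush0 : Submodule.map (seqMap F hu0).hom (D 0) = LinearMap.range (seqMap F h₀).hom :=
    stable_push F hu0 h₀ hstab₀ (hvk 0) (hstabk 0)
  rw [eq_bot_iff]
  intro ξ hξ
  rw [← hpush0] at hξ
  obtain ⟨x₀, hx₀, rfl⟩ := Submodule.mem_map.1 hξ
  have hstep : ∀ k (z : F.obj (op (useq k))), z ∈ D k →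
      ∃ z', z' ∈ D (k+1) ∧ seqMap F (humono (Nat.le_succ k)) z' = z := by
    intro k z hz
    rw [← hpush k] at hz
    obtain ⟨z', hz', hmap⟩ := Submodule.mem_map.1 hz
    exact ⟨z', hz', hmap⟩
  choose nxt hnxt hnxtmap using hstep
  let xs : ∀ k, {z : F.obj (op (useq k)) // z ∈ D k} :=
    fun k => Nat.rec ⟨x₀, hx₀⟩ (fun k p => ⟨nxt k p.1 p.2, hnxt k p.1 p.2⟩) k
  obtain ⟨y, hy, -⟩ := hseq useq humono L hleL htend (fun k => (xs k).1)
    (fun k => hnxtmap k (xs k).1 (xs k).2)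
  have hy0 : y = 0 := hvan L (Or.inr (by show u.1.1 + (u.1.2 + s) = b; simp only [hs]; ring)) y
  have hx00 : (xs 0).1 = 0 := by rw [← hy 0, hy0, map_zero]
  rw [Submodule.mem_bot]
  show seqMap F hu0 x₀ = 0
  have hx0' : x₀ = 0 := hx00
  rw [hx0', map_zero]

/-- The radical at a point: sum of all images from strictly above. -/
def Rad (w : Strip a b) : Submodule K (F.obj (op w)) :=
  ⨆ (v : Strip a b), ⨆ (h : w ≤ v), ⨆ (_ : v ≠ w), LinearMap.range (seqMap F h).hom

lemma range_le_Rad {w v : Strip a b} (h : w ≤ v) (hne : v ≠ w) :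
    LinearMap.range (seqMap F h).hom ≤ Rad F w :=
  le_iSup_of_le v (le_iSup_of_le h (le_iSup_of_le hne le_rfl))

lemma Rad_le {w : Strip a b} {S : Submodule K (F.obj (op w))}
    (hall : ∀ (v : Strip a b) (h : w ≤ v), v ≠ w → LinearMap.range (seqMap F h).hom ≤ S) :
    Rad F w ≤ S :=
  iSup_le fun v => iSup_le fun h => iSup_le fun hne => hall v h hne

set_option maxHeartbeats 2000000 in
lemma exists_nonrad (hpfd : Pfd a b K F) (hseq : SeqContinuousF a b K F)
    (hvan : VanishesOnBoundary a b K F) (G : Subfunctor a b K F)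
    (hproper : ∃ u : Strip a b, G.1 u ≠ ⊤) :
    ∃ w : Strip a b, G.1 w ⊔ Rad F w ≠ ⊤ := by
  by_contra hcon
  push_neg at hcon
  obtain ⟨u₁, hu₁⟩ := hproper
  obtain ⟨φ₁, hφ₁ne, hφ₁G⟩ := exists_dual (G.1 u₁) hu₁
  -- the poset of nonzero functionals vanishing on G
  let Pt := {p : Σ u : Strip a b, (F.obj (op u) →ₗ[K] K) //
      p.2 ≠ 0 ∧ ∀ x ∈ G.1 p.1, p.2 x = 0}
  let r : Pt → Pt → Prop := fun p q => ∃ h : p.1.1 ≤ q.1.1,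
      q.1.2 = LinearMap.comp p.1.2 (seqMap F h).hom
  have htrans : ∀ {p q t : Pt}, r p q → r q t → r p t := by
    rintro p q t ⟨h1, e1⟩ ⟨h2, e2⟩
    refine ⟨h1.trans h2, ?_⟩
    rw [e2, e1]
    ext x
    show p.1.2 (seqMap F h1 (seqMap F h2 x)) = p.1.2 (seqMap F (h1.trans h2) x)
    rw [seqMap_seqMap]
  have hrrefl : ∀ p : Pt, r p p := by
    intro p
    refine ⟨le_rfl, ?_⟩
    ext x
    show p.1.2 x = p.1.2 (seqMap F (le_refl p.1.1) x)
    rw [seqMap_refl_apply]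
  -- chains have upper bounds
  have hbdd : ∀ c : Set Pt, IsChain r c → c.Nonempty → ∃ ub, ∀ p ∈ c, r p ub := by
    intro c hchain hcne
    obtain ⟨p₀, hp₀⟩ := hcne
    by_cases htop : ∃ q ∈ c, ∀ p ∈ c, r p q
    · obtain ⟨q, _, hq⟩ := htop
      exact ⟨q, hq⟩
    push_neg at htop
    have htot : ∀ p ∈ c, ∀ q ∈ c, r p q ∨ r q p := by
      intro p hp q hq
      by_cases hpq : p = q
      · subst hpq; exact Or.inl (hrrefl p)
      · exact hchain hp hq hpq
    obtain ⟨vs, hvs, hvsbot⟩ := exists_range_bot F hpfd hseq hvan p₀.1.1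
    -- all chain elements above p₀ lie in a bounded box
    have hbox : ∀ q ∈ c, r p₀ q →
        min vs.1.1 (a - vs.1.2) ≤ q.1.1.1.1 ∧ q.1.1.1.2 ≤ max vs.1.2 (b - vs.1.1) := by
      rintro q hqc ⟨hle, heq⟩
      have hnot : ¬ (vs ≤ q.1.1) := by
        intro hvq
        apply q.2.1
        ext x
        have e2 : seqMap F hvs (seqMap F hvq x) = 0 := by
          have hmem : seqMap F hvs (seqMap F hvq x) ∈
              LinearMap.range (seqMap F hvs).hom := ⟨_, rfl⟩
          rw [hvsbot] at hmem
          simpa using hmem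
        rw [heq]
        show p₀.1.2 (seqMap F hle x) = 0
        have e1 : seqMap F hle x = seqMap F hvs (seqMap F hvq x) := by
          rw [seqMap_seqMap]
        rw [e1, e2, map_zero]
      rw [Strip.le_def] at hnot
      push_neg at hnot
      have hq2 := q.1.1.2
      have hm1 : min vs.1.1 (a - vs.1.2) ≤ vs.1.1 := min_le_left _ _
      have hm2 : min vs.1.1 (a - vs.1.2) ≤ a - vs.1.2 := min_le_right _ _
      have hM1 : vs.1.2 ≤ max vs.1.2 (b - vs.1.1) := le_max_left _ _
      have hM2 : b - vs.1.1 ≤ max vs.1.2 (b - vs.1.1) := le_max_right _ _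
      by_cases hc1 : q.1.1.1.1 ≤ vs.1.1
      · have hy := hnot hc1
        constructor <;> linarith [hq2.1, hq2.2]
      · push_neg at hc1
        constructor <;> linarith [hq2.1, hq2.2]
    -- the height function
    let fval : Pt → ℝ := fun p => p.1.1.1.2 - p.1.1.1.1
    have hfmono : ∀ {p q : Pt}, r p q → fval p ≤ fval q := by
      rintro p q ⟨⟨h1, h2⟩, -⟩
      dsimp [fval]
      linarith
    have hback : ∀ p q : Pt, r p q → fval q ≤ fval p → r q p := by
      rintro p q ⟨hle, heq⟩ hf
      obtain ⟨h1, h2⟩ := hle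
      have hx : q.1.1.1.1 = p.1.1.1.1 := by dsimp [fval] at hf; linarith
      have hy : q.1.1.1.2 = p.1.1.1.2 := by dsimp [fval] at hf; linarith
      have h' : q.1.1 ≤ p.1.1 := ⟨le_of_eq hx.symm, le_of_eq hy⟩
      refine ⟨h', ?_⟩
      ext x
      show p.1.2 x = q.1.2 (seqMap F h' x)
      rw [heq]
      show p.1.2 x = p.1.2 (seqMap F ⟨h1, h2⟩ (seqMap F h' x))
      rw [seqMap_seqMap]
      exact congrArg p.1.2 (seqMap_refl_apply F p.1.1 x).symm
    have hbddE : BddAbove (fval '' c) := by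
      refine ⟨max (fval p₀) ((max vs.1.2 (b - vs.1.1)) - (min vs.1.1 (a - vs.1.2))), ?_⟩
      rintro _ ⟨q, hqc, rfl⟩
      rcases htot q hqc p₀ hp₀ with hqp | hpq
      · exact le_trans (hfmono hqp) (le_max_left _ _)
      · obtain ⟨hb1, hb2⟩ := hbox q hqc hpq
        refine le_trans ?_ (le_max_right _ _)
        dsimp [fval]
        linarith
    have hEne : (fval '' c).Nonempty := ⟨fval p₀, p₀, hp₀, rfl⟩
    have hslt : ∀ q ∈ c, fval q < sSup (fval '' c) := by
      intro q hqc
      rcases lt_or_eq_of_le (le_csSup hbddE ⟨q, hqc, rfl⟩) with h | h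
      · exact h
      exfalso
      obtain ⟨p', hp'c, hnp⟩ := htop q hqc
      rcases htot p' hp'c q hqc with hpq' | hqp'
      · exact hnp hpq'
      · refine hnp (hback q p' hqp' ?_)
        rw [h]
        exact le_csSup hbddE ⟨p', hp'c, rfl⟩
    have hrch : ∀ k : ℕ, ∃ q, q ∈ c ∧ sSup (fval '' c) - 1/((k:ℝ)+1) < fval q := by
      intro k
      have hlt : sSup (fval '' c) - 1/((k:ℝ)+1) < sSup (fval '' c) := by
        have : (0:ℝ) < 1/((k:ℝ)+1) := by positivity
        linarith
      obtain ⟨x, ⟨q, hqc, rfl⟩, hx⟩ := exists_lt_of_lt_csSup hEne hlt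
      exact ⟨q, hqc, hx⟩
    choose rs hrsc hrslt using hrch
    -- build a monotone cofinal sequence
    let combP : {p : Pt // p ∈ c} → {p : Pt // p ∈ c} → {p : Pt // p ∈ c} := fun x y =>
      if r x.1 y.1 then y else x
    have hcomb1 : ∀ x y, r x.1 (combP x y).1 := by
      intro x y
      dsimp only [combP]
      split
      · assumption
      · exact hrrefl x.1
    have hcomb2 : ∀ x y, r y.1 (combP x y).1 := by
      intro x y
      dsimp only [combP]
      split
      · exact hrrefl y.1
      · rcases htot x.1 x.2 y.1 y.2 with h | h
        · exact absurd h ‹¬ _›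
        · exact h
    let ps : ℕ → {p : Pt // p ∈ c} := fun k =>
      Nat.rec ⟨p₀, hp₀⟩ (fun k pk => combP pk ⟨rs k, hrsc k⟩) k
    have hpsmono : ∀ k, r (ps k).1 (ps (k+1)).1 := fun k => hcomb1 _ _
    have hpsmono' : ∀ k m, k ≤ m → r (ps k).1 (ps m).1 := by
      intro k m h
      induction m, h using Nat.le_induction with
      | base => exact hrrefl _
      | succ m hm ih => exact htrans ih (hpsmono m)
    have hpsr : ∀ k, r (rs k) (ps (k+1)).1 := fun k => hcomb2 _ _
    have hps₀le : ∀ k, r p₀ (ps k).1 := fun k => hpsmono' 0 k (Nat.zero_le k)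
    have hcof : ∀ q ∈ c, ∃ k, r q (ps k).1 := by
      intro q hqc
      rcases htot q hqc p₀ hp₀ with hq | hq
      · exact ⟨0, hq⟩
      · obtain ⟨k, hk⟩ := exists_nat_one_div_lt
          (show (0:ℝ) < sSup (fval '' c) - fval q by linarith [hslt q hqc])
        have h1a : fval q < sSup (fval '' c) - 1/((k:ℝ)+1) := by linarith
        have h1 : fval q < fval (rs k) := lt_trans h1a (hrslt k)
        have h2 : fval (rs k) ≤ fval (ps (k+1)).1 := hfmono (hpsr k)
        rcases htot q hqc (ps (k+1)).1 (ps (k+1)).2 with h | h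
        · exact ⟨k+1, h⟩
        · have := hfmono h
          linarith
    -- limit point
    let useq : ℕ → Strip a b := fun k => (ps k).1.1.1
    have humono : Monotone useq := by
      intro k m h
      obtain ⟨hle, -⟩ := hpsmono' k m h
      exact hle
    have hbox' : ∀ k, min vs.1.1 (a - vs.1.2) ≤ (useq k).1.1 ∧
        (useq k).1.2 ≤ max vs.1.2 (b - vs.1.1) :=
      fun k => hbox (ps k).1 (ps k).2 (hps₀le k)
    have hbddb : BddBelow (Set.range fun k => (useq k).1.1) := by
      refine ⟨min vs.1.1 (a - vs.1.2), ?_⟩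
      rintro _ ⟨k, rfl⟩
      exact (hbox' k).1
    have hbdda : BddAbove (Set.range fun k => (useq k).1.2) := by
      refine ⟨max vs.1.2 (b - vs.1.1), ?_⟩
      rintro _ ⟨k, rfl⟩
      exact (hbox' k).2
    have hanti : Antitone fun k => (useq k).1.1 := fun k m h => (humono h).1
    have hmono2 : Monotone fun k => (useq k).1.2 := fun k m h => (humono h).2
    have htx := tendsto_atTop_ciInf hanti hbddb
    have hty := tendsto_atTop_ciSup hmono2 hbdda
    have hXY : a ≤ (⨅ k, (useq k).1.1) + (⨆ k, (useq k).1.2) ∧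
        (⨅ k, (useq k).1.1) + (⨆ k, (useq k).1.2) ≤ b := by
      have hsum := htx.add hty
      constructor
      · exact ge_of_tendsto hsum (Filter.Eventually.of_forall fun k => (useq k).2.1)
      · exact le_of_tendsto hsum (Filter.Eventually.of_forall fun k => (useq k).2.2)
    let L : Strip a b := ⟨(⨅ k, (useq k).1.1, ⨆ k, (useq k).1.2), hXY⟩
    have hleL : ∀ k, useq k ≤ L := fun k => ⟨ciInf_le hbddb k, le_ciSup hbdda k⟩
    have htendL : Filter.Tendsto (fun k => (useq k).1) Filter.atTop (nhds L.1) :=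
      htx.prodMk_nhds hty
    -- Mittag-Leffler along the sequence
    let φs : ∀ k, F.obj (op (useq k)) →ₗ[K] K := fun k => (ps k).1.1.2
    have hφcomp : ∀ k m (h : k ≤ m),
        φs m = LinearMap.comp (φs k) (seqMap F (humono h)).hom := by
      intro k m h
      obtain ⟨hle, heq⟩ := hpsmono' k m h
      exact heq
    haveI : ∀ k, FiniteDimensional K (F.obj (op (useq k))) := fun k => hpfd _
    let Wh : ℕ → Type := fun k => F.obj (op (useq k)) × K
    let ρ : ∀ k m, k ≤ m → (Wh m →ₗ[K] Wh k) := fun k m h =>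
      LinearMap.prodMap (seqMap F (humono h)).hom LinearMap.id
    have hρcomp : ∀ k m n (h1 : k ≤ m) (h2 : m ≤ n) (z : Wh n),
        ρ k m h1 (ρ m n h2 z) = ρ k n (h1.trans h2) z := by
      intro k m n h1 h2 z
      refine Prod.ext ?_ rfl
      show seqMap F (humono h1) (seqMap F (humono h2) z.1) =
        seqMap F (humono (Nat.le_trans h1 h2)) z.1
      rw [seqMap_seqMap]
    let Sh : ∀ k, Submodule K (Wh k) := fun k => LinearMap.graph (φs k)
    have hmapS : ∀ k m (h : k ≤ m), ∀ z ∈ Sh m, ρ k m h z ∈ Sh k := by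
      intro k m h z hz
      have hz' : z.2 = φs m z.1 := (LinearMap.mem_graph_iff _ _).1 hz
      show ρ k m h z ∈ LinearMap.graph (φs k)
      rw [LinearMap.mem_graph_iff]
      show z.2 = φs k (seqMap F (humono h) z.1)
      rw [hz', hφcomp k m h]
      rfl
    let Nh : ∀ k m, k ≤ m → Submodule K (Wh k) := fun k m h =>
      Submodule.map (ρ k m h) (Sh m)
    have hNle : ∀ k m n (h1 : k ≤ m) (h2 : m ≤ n), Nh k n (h1.trans h2) ≤ Nh k m h1 := by
      rintro k m n h1 h2 x hx
      obtain ⟨z, hz, rfl⟩ := Submodule.mem_map.1 hx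
      exact Submodule.mem_map.2 ⟨ρ m n h2 z, hmapS m n h2 z hz, hρcomp k m n h1 h2 z⟩
    have hNS : ∀ k m (h : k ≤ m), Nh k m h ≤ Sh k := by
      rintro k m h x hx
      obtain ⟨z, hz, rfl⟩ := Submodule.mem_map.1 hx
      exact hmapS k m h z hz
    have hstab : ∀ k, ∃ M, ∃ hM : k ≤ M, ∀ m (hm : M ≤ m),
        Nh k m (hM.trans hm) = Nh k M hM := by
      intro k
      have hne2 : {n : ℕ | ∃ m, ∃ hm : k ≤ m, n = Module.finrank K (Nh k m hm)}.Nonempty :=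
        ⟨_, k, le_rfl, rfl⟩
      obtain ⟨M, hM, hrk⟩ := Nat.sInf_mem hne2
      refine ⟨M, hM, fun m hm => ?_⟩
      refine Submodule.eq_of_le_of_finrank_le (hNle k M m hM hm) ?_
      rw [← hrk]
      exact Nat.sInf_le ⟨m, hM.trans hm, rfl⟩
    choose Ms hMs hMstab using hstab
    let Bh : ∀ k, Submodule K (Wh k) := fun k => Nh k (Ms k) (hMs k)
    have hBsurj : ∀ k, ∀ z ∈ Bh k, ∃ z', z' ∈ Bh (k+1) ∧
        ρ k (k+1) (Nat.le_succ k) z' = z := by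
      intro k z hz
      have h1 : Ms k ≤ max (Ms k) (Ms (k+1)) := le_max_left _ _
      have h2 : Ms (k+1) ≤ max (Ms k) (Ms (k+1)) := le_max_right _ _
      have hk1 : k+1 ≤ max (Ms k) (Ms (k+1)) := le_trans (hMs (k+1)) h2
      have e1 := hMstab k (max (Ms k) (Ms (k+1))) h1
      have hz' : z ∈ Nh k (Ms k) (hMs k) := hz
      rw [← e1] at hz'
      obtain ⟨zz, hzz, rfl⟩ := Submodule.mem_map.1 hz'
      refine ⟨ρ (k+1) (max (Ms k) (Ms (k+1))) hk1 zz, ?_, ?_⟩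
      · have hmem : ρ (k+1) (max (Ms k) (Ms (k+1))) hk1 zz ∈
            Nh (k+1) (max (Ms k) (Ms (k+1))) ((hMs (k+1)).trans h2) :=
          Submodule.mem_map.2 ⟨zz, hzz, rfl⟩
        rw [hMstab (k+1) (max (Ms k) (Ms (k+1))) h2] at hmem
        exact hmem
      · exact hρcomp k (k+1) (max (Ms k) (Ms (k+1))) (Nat.le_succ k) hk1 zz
    have hinit : ∃ z, z ∈ Bh 0 ∧ z.2 = 1 := by
      have hφM : φs (Ms 0) ≠ 0 := (ps (Ms 0)).1.2.1
      obtain ⟨x, hx⟩ : ∃ x, φs (Ms 0) x ≠ 0 := by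
        by_contra hall
        push_neg at hall
        exact hφM (LinearMap.ext fun x => by simp [hall])
      have hx1 : φs (Ms 0) ((φs (Ms 0) x)⁻¹ • x) = 1 := by
        rw [map_smul]
        exact inv_mul_cancel₀ hx
      refine ⟨ρ 0 (Ms 0) (hMs 0) ((φs (Ms 0) x)⁻¹ • x, 1),
        Submodule.mem_map.2 ⟨_, ?_, rfl⟩, rfl⟩
      show ((φs (Ms 0) x)⁻¹ • x, (1:K)) ∈ LinearMap.graph (φs (Ms 0))
      rw [LinearMap.mem_graph_iff]
      exact hx1.symm
    obtain ⟨z₀, hz₀B, hz₀t⟩ := hinit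
    choose nx hnxB hnxmap using hBsurj
    let zs : ∀ k, {z : Wh k // z ∈ Bh k} := fun k =>
      Nat.rec ⟨z₀, hz₀B⟩ (fun k p => ⟨nx k p.1 p.2, hnxB k p.1 p.2⟩) k
    have hzmap : ∀ k, ρ k (k+1) (Nat.le_succ k) (zs (k+1)).1 = (zs k).1 :=
      fun k => hnxmap k (zs k).1 (zs k).2
    have hzt : ∀ k, ((zs k).1).2 = 1 := by
      intro k
      induction k with
      | zero => exact hz₀t
      | succ k ih =>
        have := ih
        rw [← hzmap k] at this
        exact this
    have hφz : ∀ k, φs k ((zs k).1).1 = 1 := by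
      intro k
      have hzS : (zs k).1 ∈ Sh k := hNS k (Ms k) (hMs k) (zs k).2
      have hzS' : ((zs k).1).2 = φs k ((zs k).1).1 := (LinearMap.mem_graph_iff _ _).1 hzS
      rw [← hzS']
      exact hzt k
    have hcomp : ∀ k, seqMap F (humono (Nat.le_succ k)) ((zs (k+1)).1.1) = (zs k).1.1 :=
      fun k => congrArg Prod.fst (hzmap k)
    obtain ⟨y, hy, -⟩ := hseq useq humono L hleL htendL (fun k => (zs k).1.1) hcomp
    let φL : F.obj (op L) →ₗ[K] K := LinearMap.comp (φs 0) (seqMap F (hleL 0)).hom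
    have hφL1 : φL y = 1 := by
      show φs 0 (seqMap F (hleL 0) y) = 1
      rw [hy 0]
      exact hφz 0
    have hφLne : φL ≠ 0 := by
      intro h0
      rw [h0] at hφL1
      exact one_ne_zero (α := K) (by simpa using hφL1.symm)
    have hφLG : ∀ x ∈ G.1 L, φL x = 0 := by
      intro x hx
      show φs 0 (seqMap F (hleL 0) x) = 0
      exact (ps 0).1.2.2 _ (G.2 L (useq 0) (hleL 0) ⟨x, hx, rfl⟩)
    refine ⟨⟨⟨L, φL⟩, hφLne, hφLG⟩, ?_⟩
    intro q hqc
    obtain ⟨k, hqk⟩ := hcof q hqc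
    refine htrans hqk ⟨hleL k, ?_⟩
    ext x
    show φs 0 (seqMap F (hleL 0) x) = φs k (seqMap F (hleL k) x)
    rw [hφcomp 0 k (Nat.zero_le k)]
    show φs 0 (seqMap F (hleL 0) x) =
      φs 0 (seqMap F (humono (Nat.zero_le k)) (seqMap F (hleL k) x))
    rw [seqMap_seqMap]
  -- Zorn
  haveI : Nonempty Pt := ⟨⟨⟨u₁, φ₁⟩, hφ₁ne, hφ₁G⟩⟩
  obtain ⟨m, hm⟩ := exists_maximal_of_nonempty_chains_bounded hbdd
    (fun {p q t} hpq hqt => htrans hpq hqt)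
  -- m is maximal, derive a contradiction
  have hradker : ¬ (Rad F m.1.1 ≤ LinearMap.ker m.1.2) := by
    intro hR
    have hG : G.1 m.1.1 ≤ LinearMap.ker m.1.2 := fun x hx => m.2.2 x hx
    have htop' : (⊤ : Submodule K (F.obj (op m.1.1))) ≤ LinearMap.ker m.1.2 := by
      rw [← hcon m.1.1]
      exact sup_le hG hR
    exact m.2.1 (LinearMap.ext fun x => htop' (Submodule.mem_top))
  have hwit : ∃ (v : Strip a b) (h : m.1.1 ≤ v), v ≠ m.1.1 ∧
      ¬ (LinearMap.range (seqMap F h).hom ≤ LinearMap.ker m.1.2) := by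
    by_contra hall
    push_neg at hall
    exact hradker (Rad_le F fun v h hne => hall v h hne)
  obtain ⟨v, h, hvne, hnk⟩ := hwit
  obtain ⟨ξ, hξ⟩ : ∃ ξ, m.1.2 (seqMap F h ξ) ≠ 0 := by
    by_contra hall
    push_neg at hall
    apply hnk
    rintro x ⟨ξ, rfl⟩
    exact hall ξ
  have hψne : LinearMap.comp m.1.2 (seqMap F h).hom ≠ 0 := by
    intro h0
    apply hξ
    have h1 : (LinearMap.comp m.1.2 (seqMap F h).hom) ξ = 0 := by rw [h0]; rfl
    exact h1
  have hψG : ∀ x ∈ G.1 v, (LinearMap.comp m.1.2 (seqMap F h).hom) x = 0 := by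
    intro x hx
    show m.1.2 (seqMap F h x) = 0
    exact m.2.2 _ (G.2 v m.1.1 h ⟨x, hx, rfl⟩)
  have hmq : r m ⟨⟨v, LinearMap.comp m.1.2 (seqMap F h).hom⟩, hψne, hψG⟩ := ⟨h, rfl⟩
  obtain ⟨h', -⟩ := hm _ hmq
  exact hvne (le_antisymm h' h)

end PSLM

end Aux
set_option maxHeartbeats 1000000 in
/-- every proper subfunctor of a pfd sequentially continuous functor is
contained pointwise in a maximal proper subfunctor. -/
theorem proper_subfunctor_le_maximal (a b : ℝ) (K : Type) [Field K]
    (F : (Strip a b)ᵒᵖ ⥤ ModuleCat K)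
    (hpfd : Pfd a b K F) (hseq : SeqContinuousF a b K F)
    (hvan : VanishesOnBoundary a b K F)
    (G : Subfunctor a b K F) (hproper : ∃ u : Strip a b, G.1 u ≠ ⊤) :
    ∃ Gmax : Subfunctor a b K F,
      (∃ u : Strip a b, Gmax.1 u ≠ ⊤) ∧
      (∀ u : Strip a b, G.1 u ≤ Gmax.1 u) ∧
      (∀ G' : Subfunctor a b K F, (∃ u : Strip a b, G'.1 u ≠ ⊤) →
        (∀ u : Strip a b, Gmax.1 u ≤ G'.1 u) → ∀ u : Strip a b, G'.1 u = Gmax.1 u) := by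
  classical
  obtain ⟨w, hw⟩ := PSLM.exists_nonrad F hpfd hseq hvan G hproper
  obtain ⟨φ, hφne, hφ0⟩ := PSLM.exists_dual (G.1 w ⊔ PSLM.Rad F w) hw
  have hGker : G.1 w ≤ LinearMap.ker φ := fun x hx => hφ0 x (Submodule.mem_sup_left hx)
  have hRker : PSLM.Rad F w ≤ LinearMap.ker φ := fun x hx =>
    hφ0 x (Submodule.mem_sup_right hx)
  have hkerne : LinearMap.ker φ ≠ ⊤ := by
    intro h
    apply hφne
    ext x
    have hx : x ∈ LinearMap.ker φ := by rw [h]; trivial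
    exact hx
  set S : ∀ u : Strip a b, Submodule K (F.obj (op u)) :=
    fun u => if h : u = w then h.symm ▸ LinearMap.ker φ else ⊤ with hSdef
  have hSw : S w = LinearMap.ker φ := by
    show (if h : w = w then h.symm ▸ LinearMap.ker φ else ⊤) = LinearMap.ker φ
    rw [dif_pos rfl]
  have hSu : ∀ u : Strip a b, u ≠ w → S u = ⊤ := by
    intro u hu
    show (if h : u = w then h.symm ▸ LinearMap.ker φ else ⊤) = ⊤
    rw [dif_neg hu]
  have hsub : ∀ (u u' : Strip a b) (h : u' ≤ u),
      Submodule.map (seqMap F h).hom (S u) ≤ S u' := by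
    intro u u' h
    by_cases hu : u = w
    · subst hu
      by_cases hu' : u' = u
      · subst hu'
        rw [hSw]
        rintro x hx
        obtain ⟨ξ, hξ, rfl⟩ := Submodule.mem_map.1 hx
        have e : seqMap F h ξ = ξ := PSLM.seqMap_refl_apply F _ ξ
        rw [e]
        exact hξ
      · rw [hSu u' hu']
        exact le_top
    · by_cases hu' : u' = w
      · subst hu'
        rw [hSw, hSu u hu, Submodule.map_top]
        exact le_trans (PSLM.range_le_Rad F h hu) hRker
      · rw [hSu u' hu']
        exact le_top
  refine ⟨⟨S, hsub⟩, ⟨w, ?_⟩, ?_, ?_⟩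
  · show S w ≠ ⊤
    rw [hSw]
    exact hkerne
  · intro u
    show G.1 u ≤ S u
    by_cases hu : u = w
    · subst hu
      rw [hSw]
      exact hGker
    · rw [hSu u hu]
      exact le_top
  · rintro G' ⟨u₁, hu₁⟩ hle u
    show G'.1 u = S u
    have hall : ∀ z : Strip a b, z ≠ w → G'.1 z = ⊤ := by
      intro z hz
      have h2 : S z ≤ G'.1 z := hle z
      rw [hSu z hz] at h2
      exact top_unique h2
    have hu₁w : u₁ = w := by
      by_contra hne
      exact hu₁ (hall u₁ hne)
    by_cases hu : u = w
    · rw [hu, hSw]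
      have h1 : LinearMap.ker φ ≤ G'.1 w := by
        have h2 : S w ≤ G'.1 w := hle w
        rwa [hSw] at h2
      by_contra hne
      rw [hu₁w] at hu₁
      exact hu₁ (PSLM.ker_coatom φ hφne _ h1 hne)
    · rw [hSu u hu]
      exact hall u hu
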